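/- Let (M, J, g) be an almost Hermitian manifold with Chern connection ∇ and curvature R, let S ⊆ M be an embedded almost complex submanifold with induced Chern connection curvature R̂ and second fundamental form II. Then for any nonzero X ∈ TₚS, the holomorphic sectional curvatures satisfy H(X) = Ĥ(X) + 2|II(X, X)|²/|X|⁴. In particular Ĥ(X) ≤ H(X), with equality if and only if II(X, X) = 0. -/

import Mathlib

/-- Abstract model of Corollary 4.5: for an embedded almost complex submanifold `S`
(with tangent spaces `T p`) of an almost Hermitian manifold with Chern connection
`Cov` and curvature `R(X,Y)Z = ∇_X∇_Y Z - ∇_Y∇_X Z - ∇_{[X,Y]}Z`, the holomorphic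
sectional curvatures satisfy `H(X) = Ĥ(X) + 2|II(X,X)|²/|X|⁴`; in particular
`Ĥ(X) ≤ H(X)` with equality iff `II(X,X) = 0`. -/
private lemma hsc_aux {a b c n : ℝ} (h : a = b + 2 * c) (hc : 0 ≤ c) (hn : 0 < n) :
    a / n = b / n + 2 * c / n ∧ b / n ≤ a / n ∧ (b / n = a / n ↔ c = 0) := by
  refine ⟨by rw [h]; ring, ?_, ?_⟩
  · rw [h, add_div]
    have : 0 ≤ 2 * c / n := div_nonneg (by linarith) hn.le
    linarith
  · rw [h, add_div]
    constructor
    · intro he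
      have h0 : 2 * c / n = 0 := by linarith
      have := (div_eq_zero_iff.mp h0).resolve_right hn.ne'
      linarith
    · intro he; rw [he]; simp

theorem holomorphic_sectional_curvature_submanifold
    {M E : Type*} [NormedAddCommGroup E] [InnerProductSpace ℝ E]
    (T : M → Submodule ℝ E) [∀ p, CompleteSpace (T p)]
    (J : E →ₗ[ℝ] E)
    (hJ2 : ∀ v : E, J (J v) = -v)
    (hJg : ∀ v w : E, (inner ℝ (J v) (J w) : ℝ) = inner ℝ v w)
    (hJT : ∀ (p : M), ∀ v ∈ T p, J v ∈ T p)
    (D : (M → E) → (M → ℝ) → (M → ℝ))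
    (Cov : (M → E) → (M → E) → (M → E))
    (Lb : (M → E) → (M → E) → (M → E))
    (hmetric : ∀ X Y Z : M → E,
      D X (fun p => (inner ℝ (Y p) (Z p) : ℝ)) =
        fun p => (inner ℝ (Cov X Y p) (Z p) : ℝ) + (inner ℝ (Y p) (Cov X Z p) : ℝ))
    (hCovJ : ∀ X Y : M → E, Cov X (fun p => J (Y p)) = fun p => J (Cov X Y p))
    (htor : ∀ (X : M → E) (p : M),
      Cov X (fun q => J (X q)) p - Cov (fun q => J (X q)) X p - Lb X (fun q => J (X q)) p = 0)
    (hLbT : ∀ X Y : M → E, (∀ p, X p ∈ T p) → (∀ p, Y p ∈ T p) → ∀ p, Lb X Y p ∈ T p)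
    -- the induced (projected) Chern connection on `S`
    (CovT : (M → E) → (M → E) → (M → E))
    (hCovT : CovT = fun X Y => fun p => (Submodule.orthogonalProjectionOnto (T p) (Cov X Y p) : E))
    -- the second fundamental form
    (II : (M → E) → (M → E) → (M → E))
    (hII : II = fun X Y => fun p => Cov X Y p - CovT X Y p)
    -- curvature tensors of `∇` and of the induced connection `∇̂`
    (R Rhat : (M → E) → (M → E) → (M → E) → (M → E))
    (hR : R = fun X Y Z => fun p =>
      Cov X (Cov Y Z) p - Cov Y (Cov X Z) p - Cov (Lb X Y) Z p)
    (hRhat : Rhat = fun X Y Z => fun p =>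
      CovT X (CovT Y Z) p - CovT Y (CovT X Z) p - CovT (Lb X Y) Z p)
    (X : M → E) (hX : ∀ p, X p ∈ T p) (p : M) (hXp : X p ≠ 0) :
    (inner ℝ (R X (fun q => J (X q)) (fun q => J (X q)) p) (X p) : ℝ) / ‖X p‖ ^ 4 =
        (inner ℝ (Rhat X (fun q => J (X q)) (fun q => J (X q)) p) (X p) : ℝ) / ‖X p‖ ^ 4
          + 2 * ‖II X X p‖ ^ 2 / ‖X p‖ ^ 4 ∧
      (inner ℝ (Rhat X (fun q => J (X q)) (fun q => J (X q)) p) (X p) : ℝ) / ‖X p‖ ^ 4 ≤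
        (inner ℝ (R X (fun q => J (X q)) (fun q => J (X q)) p) (X p) : ℝ) / ‖X p‖ ^ 4 ∧
      ((inner ℝ (Rhat X (fun q => J (X q)) (fun q => J (X q)) p) (X p) : ℝ) / ‖X p‖ ^ 4 =
        (inner ℝ (R X (fun q => J (X q)) (fun q => J (X q)) p) (X p) : ℝ) / ‖X p‖ ^ 4 ↔
          II X X p = 0) := by
  subst hCovT hII hR hRhat
  simp only []
  set JX : M → E := fun q => J (X q) with hJXdef
  set N : E := Cov X X p - (Submodule.orthogonalProjectionOnto (T p) (Cov X X p) : E) with hN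
  set PW1 : M → E := fun q => (Submodule.orthogonalProjectionOnto (T q) (Cov JX JX q) : E) with hPW1
  set PW2 : M → E := fun q => (Submodule.orthogonalProjectionOnto (T q) (Cov X JX q) : E) with hPW2
  have hJXT : ∀ q, JX q ∈ T q := fun q => hJT q _ (hX q)
  -- projection commutes with J
  have hPJ : ∀ (q : M) (v : E),
      ((Submodule.orthogonalProjectionOnto (T q) (J v) : E)) = J ((Submodule.orthogonalProjectionOnto (T q) v : E)) := by
    intro q v
    apply Submodule.eq_starProjection_of_mem_of_inner_eq_zero
    · exact hJT q _ (Submodule.orthogonalProjectionOnto (T q) v).2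
    · intro w hw
      have hw' : J w ∈ T q := hJT q _ hw
      have key : (inner ℝ (J v - J ((Submodule.orthogonalProjectionOnto (T q) v : E))) w : ℝ)
          = - (inner ℝ (v - (Submodule.orthogonalProjectionOnto (T q) v : E)) (J w) : ℝ) := by
        have h1 : (inner ℝ (J (v - (Submodule.orthogonalProjectionOnto (T q) v : E))) (J (J w)) : ℝ)
            = inner ℝ (v - (Submodule.orthogonalProjectionOnto (T q) v : E)) (J w) := hJg _ _
        rw [hJ2 w, inner_neg_right, map_sub] at h1
        linarith
      rw [key, neg_eq_zero]
      exact Submodule.starProjection_inner_eq_zero (K := T q) v (J w) hw'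
  -- pairing projection with a tangent vector
  have hPt : ∀ (q : M) (w u : E), u ∈ T q →
      (inner ℝ ((Submodule.orthogonalProjectionOnto (T q) w : E)) u : ℝ) = inner ℝ w u := by
    intro q w u hu
    have h0 : inner ℝ (w - (Submodule.orthogonalProjectionOnto (T q) w : E)) u = 0 :=
      Submodule.starProjection_inner_eq_zero (K := T q) w u hu
    rw [inner_sub_left] at h0
    linarith
  -- second fundamental form values
  have hCovXJX : Cov X JX p = J (Cov X X p) := congrFun (hCovJ X X) p
  have hIIXJX : Cov X JX p - PW2 p = J N := by
    simp only [hPW2]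
    rw [hCovXJX, hPJ, ← map_sub, hN]
  have hCovJXX : Cov JX X p = Cov X JX p - Lb X JX p := by
    have h := htor X p
    have h' : Cov X JX p - Cov JX X p - Lb X JX p = 0 := h
    have := sub_eq_zero.mp (by rw [sub_sub] at h'; exact h')
    rw [this]; abel
  have hLbmem : Lb X JX p ∈ T p := hLbT X JX hX hJXT p
  have hPLb : (Submodule.orthogonalProjectionOnto (T p) (Lb X JX p) : E) = Lb X JX p := by
    rw [← Submodule.starProjection_apply, Submodule.starProjection_eq_self_iff]; exact hLbmem
  have hIIJXX : Cov JX X p - (Submodule.orthogonalProjectionOnto (T p) (Cov JX X p) : E) = J N := by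
    rw [hCovJXX, map_sub, Submodule.coe_sub, hPLb]
    have : Cov X JX p - Lb X JX p - ((Submodule.orthogonalProjectionOnto (T p) (Cov X JX p) : E) - Lb X JX p)
        = Cov X JX p - PW2 p := by simp only [hPW2]; abel
    rw [this, hIIXJX]
  have hCovJXJX : Cov JX JX p = J (Cov JX X p) := congrFun (hCovJ JX X) p
  have hIIJXJX : Cov JX JX p - PW1 p = -N := by
    simp only [hPW1]
    rw [hCovJXJX, hPJ, ← map_sub, hIIJXX, hJ2]
  -- the key metric-compatibility identity
  have key : ∀ (V W₁ W₂ : M → E),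
      ((fun q => (inner ℝ (W₁ q) (X q) : ℝ)) = fun q => (inner ℝ (W₂ q) (X q) : ℝ)) →
      (inner ℝ (Cov V W₁ p) (X p) : ℝ) - (inner ℝ (Cov V W₂ p) (X p) : ℝ)
        = (inner ℝ (W₂ p) (Cov V X p) : ℝ) - (inner ℝ (W₁ p) (Cov V X p) : ℝ) := by
    intro V W₁ W₂ hW
    have h1 := congrFun (hmetric V W₁ X) p
    have h2 := congrFun (hmetric V W₂ X) p
    rw [hW, h2] at h1
    linarith
  -- normal vectors pair trivially with tangential parts
  have hNperp : ∀ w : E, (inner ℝ N w : ℝ) = inner ℝ N (w - (Submodule.orthogonalProjectionOnto (T p) w : E)) := by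
    intro w
    have h0 : (inner ℝ N ((Submodule.orthogonalProjectionOnto (T p) w : E)) : ℝ) = 0 := by
      rw [hN]
      exact Submodule.starProjection_inner_eq_zero (K := T p) (Cov X X p) _ (Submodule.orthogonalProjectionOnto (T p) w).2
    rw [inner_sub_right]
    linarith
  have hJNperp : ∀ w : E, (inner ℝ (J N) w : ℝ) = inner ℝ (J N) (w - (Submodule.orthogonalProjectionOnto (T p) w : E)) := by
    intro w
    have h0 : (inner ℝ (J N) ((Submodule.orthogonalProjectionOnto (T p) w : E)) : ℝ) = 0 := by
      rw [← hIIJXX]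
      exact Submodule.starProjection_inner_eq_zero (K := T p) (Cov JX X p) _ (Submodule.orthogonalProjectionOnto (T p) w).2
    rw [inner_sub_right]
    linarith
  -- bracket A
  have a1 : (inner ℝ (Cov X (Cov JX JX) p) (X p) : ℝ) - inner ℝ (Cov X PW1 p) (X p) = ‖N‖ ^ 2 := by
    have h := key X (Cov JX JX) PW1 (funext fun q => (hPt q _ _ (hX q)).symm)
    have hsplit : (inner ℝ (PW1 p) (Cov X X p) : ℝ) - inner ℝ (Cov JX JX p) (Cov X X p)
        = - inner ℝ (Cov JX JX p - PW1 p) (Cov X X p) := by rw [inner_sub_left]; ring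
    rw [hsplit, hIIJXJX, inner_neg_left] at h
    have h2 : (inner ℝ N (Cov X X p) : ℝ) = ‖N‖ ^ 2 := by
      rw [hNperp, ← hN, real_inner_self_eq_norm_sq]
    linarith
  -- bracket B
  have a2 : (inner ℝ (Cov JX (Cov X JX) p) (X p) : ℝ) - inner ℝ (Cov JX PW2 p) (X p) = -‖N‖ ^ 2 := by
    have h := key JX (Cov X JX) PW2 (funext fun q => (hPt q _ _ (hX q)).symm)
    have hsplit : (inner ℝ (PW2 p) (Cov JX X p) : ℝ) - inner ℝ (Cov X JX p) (Cov JX X p)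
        = - inner ℝ (Cov X JX p - PW2 p) (Cov JX X p) := by rw [inner_sub_left]; ring
    rw [hsplit, hIIXJX] at h
    have h2 : (inner ℝ (J N) (Cov JX X p) : ℝ) = ‖N‖ ^ 2 := by
      rw [hJNperp, hIIJXX, hJg, real_inner_self_eq_norm_sq]
    linarith
  -- bracket C and outer projections
  have a3 : (inner ℝ ((Submodule.orthogonalProjectionOnto (T p) (Cov X PW1 p) : E)) (X p) : ℝ)
      = inner ℝ (Cov X PW1 p) (X p) := hPt p _ _ (hX p)
  have a4 : (inner ℝ ((Submodule.orthogonalProjectionOnto (T p) (Cov JX PW2 p) : E)) (X p) : ℝ)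
      = inner ℝ (Cov JX PW2 p) (X p) := hPt p _ _ (hX p)
  have a5 : (inner ℝ ((Submodule.orthogonalProjectionOnto (T p) (Cov (Lb X JX) JX p) : E)) (X p) : ℝ)
      = inner ℝ (Cov (Lb X JX) JX p) (X p) := hPt p _ _ (hX p)
  -- main Gauss identity
  have hmain : (inner ℝ (Cov X (Cov JX JX) p - Cov JX (Cov X JX) p - Cov (Lb X JX) JX p) (X p) : ℝ)
      = inner ℝ ((Submodule.orthogonalProjectionOnto (T p) (Cov X PW1 p) : E)
            - (Submodule.orthogonalProjectionOnto (T p) (Cov JX PW2 p) : E)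
            - (Submodule.orthogonalProjectionOnto (T p) (Cov (Lb X JX) JX p) : E)) (X p) + 2 * ‖N‖ ^ 2 := by
    simp only [inner_sub_left]
    linarith
  have hnorm : ‖X p‖ ≠ 0 := norm_ne_zero_iff.mpr hXp
  have hn : (0:ℝ) < ‖X p‖ ^ 4 := by positivity
  obtain ⟨h1, h2, h3⟩ := hsc_aux hmain (by positivity) hn
  exact ⟨h1, h2, h3.trans (by simp)⟩
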